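/- arXiv:1806.09619 — 2 statements merged into one kernel-verified Lean document; each statement's English description precedes it below -/
import Mathlib

section
/- The uncoded decentralized coded caching rate R_u(M) = ((N-M)/M)·(1 - ((N-M)/N)^{min(N,K)}) is strictly decreasing in M on (0, N) for fixed N ≥ 1 and K ≥ 1. -/
lemma stmt7_key (N n : ℕ) (M : ℝ) (hM0 : 0 < M) (hMN : M < N) :
    ((N : ℝ) - M) / M * (1 - (((N : ℝ) - M) / N) ^ n)
      = ∑ i ∈ Finset.range n, (((N : ℝ) - M) / N) ^ (i + 1) := by
  have hNpos : (0 : ℝ) < N := hM0.trans hMN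
  set u : ℝ := ((N : ℝ) - M) / N with hu
  have hu1 : u ≠ 1 := by
    have : u < 1 := by
      rw [hu, div_lt_one hNpos]; linarith
    exact ne_of_lt this
  have hgs : ∑ i ∈ Finset.range n, u ^ i = (u ^ n - 1) / (u - 1) := geom_sum_eq hu1 n
  have hsum : ∑ i ∈ Finset.range n, u ^ (i + 1) = u * ((u ^ n - 1) / (u - 1)) := by
    rw [← hgs, Finset.mul_sum]
    exact Finset.sum_congr rfl fun i _ => by ring
  rw [hsum, hu]
  have hM : M ≠ 0 := ne_of_gt hM0
  have hNne : (N : ℝ) ≠ 0 := ne_of_gt hNpos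
  have hd : ((N : ℝ) - M) / N - 1 ≠ 0 := by
    intro h
    apply hM
    field_simp at h
    linarith
  field_simp
  rw [show (N : ℝ) - M - N = -M by ring, eq_div_iff (neg_ne_zero.mpr hM)]
  ring

/-- The uncoded decentralized rate R_u(M) = ((N-M)/M)(1-((N-M)/N)^{min(N,K)})
is strictly decreasing in M on (0,N), for fixed integers N ≥ 1, K ≥ 1. -/
theorem stmt7 (N K : ℕ) (hN : 1 ≤ N) (hK : 1 ≤ K) :
    StrictAntiOn
      (fun M : ℝ => ((N : ℝ) - M) / M * (1 - (((N : ℝ) - M) / N) ^ (min N K)))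
      (Set.Ioo 0 (N : ℝ)) := by
  intro a ha b hb hab
  obtain ⟨ha0, haN⟩ := ha
  obtain ⟨hb0, hbN⟩ := hb
  have hNpos : (0 : ℝ) < N := ha0.trans haN
  simp only
  rw [stmt7_key N (min N K) a ha0 haN, stmt7_key N (min N K) b hb0 hbN]
  apply Finset.sum_lt_sum_of_nonempty
  · exact Finset.nonempty_range_iff.mpr (by omega)
  · intro i _
    apply pow_lt_pow_left₀ _ _ (by omega)
    · exact (div_lt_div_iff_of_pos_right hNpos).mpr (by linarith)
    · exact div_nonneg (by linarith) (le_of_lt hNpos)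
end

section
/- For uncoded prefetching (r = 1, so q = M/N), the general rate formula R_dec reduces to the uncoded decentralized rate: if s = 1 (i.e., A(2) < 1 ≤ A(1)) and the full last iteration is needed, R_dec with r=1 equals Σ_{j=1}^{K} q^{j-1}(1-q)^{K-j+1}(C(K,j) - C(K-J,j)), which equals ((1-q)/q)·(1 - (1-q)^{J}) where J = min(N,K). -/
/-- For q ∈ (0,1) and integers K ≥ J ≥ 1:
Σ_{j=1}^{K} q^{j-1}(1-q)^{K-j+1}(C(K,j) - C(K-J,j)) = ((1-q)/q)(1-(1-q)^J),
recovering the uncoded decentralized rate from the general formula at r = 1. -/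
theorem stmt11 (q : ℝ) (hq0 : 0 < q) (hq1 : q < 1) (K J : ℕ)
    (hJ : 1 ≤ J) (hJK : J ≤ K) :
    ∑ j ∈ Finset.Icc 1 K,
      q ^ (j - 1) * (1 - q) ^ (K - j + 1) *
        ((Nat.choose K j : ℝ) - (Nat.choose (K - J) j : ℝ))
      = (1 - q) / q * (1 - (1 - q) ^ J) := by
  have hqne : q ≠ 0 := ne_of_gt hq0
  have key : ∀ n : ℕ, n ≤ K →
      ∑ j ∈ Finset.Icc 1 K, q ^ (j - 1) * (1 - q) ^ (K - j + 1) * (Nat.choose n j : ℝ)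
      = (1 - q) ^ (K - n + 1) / q * (1 - (1 - q) ^ n) := by
    intro n hn
    have hsub : Finset.Icc 1 n ⊆ Finset.Icc 1 K := Finset.Icc_subset_Icc_right hn
    have hrestrict :
        ∑ j ∈ Finset.Icc 1 K, q ^ (j - 1) * (1 - q) ^ (K - j + 1) * (Nat.choose n j : ℝ)
        = ∑ j ∈ Finset.Icc 1 n, q ^ (j - 1) * (1 - q) ^ (K - j + 1) * (Nat.choose n j : ℝ) := by
      refine (Finset.sum_subset hsub ?_).symm
      intro j hjK hjn
      simp only [Finset.mem_Icc] at hjK hjn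
      have : n < j := by omega
      rw [Nat.choose_eq_zero_of_lt this]
      simp
    rw [hrestrict]
    have hterm : ∀ j ∈ Finset.Icc 1 n,
        q ^ (j - 1) * (1 - q) ^ (K - j + 1) * (Nat.choose n j : ℝ)
        = ((1 - q) ^ (K - n + 1) / q) * ((Nat.choose n j : ℝ) * q ^ j * (1 - q) ^ (n - j)) := by
      intro j hj
      simp only [Finset.mem_Icc] at hj
      have h1 : q ^ j = q ^ (j - 1) * q := by
        rw [← pow_succ]; congr 1; omega
      have h2 : (1 - q) ^ (K - j + 1) = (1 - q) ^ (n - j) * (1 - q) ^ (K - n + 1) := by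
        rw [← pow_add]; congr 1; omega
      rw [h1, h2]
      field_simp
    rw [Finset.sum_congr rfl hterm, ← Finset.mul_sum]
    have hbin : ∑ j ∈ Finset.range (n + 1), (Nat.choose n j : ℝ) * q ^ j * (1 - q) ^ (n - j) = 1 := by
      have := add_pow q (1 - q) n
      simp only [add_sub_cancel, one_pow] at this
      refine Eq.trans ?_ this.symm
      apply Finset.sum_congr rfl
      intro j hj; ring
    have hins : Finset.range (n + 1) = insert 0 (Finset.Icc 1 n) := by
      ext x; simp [Nat.lt_succ_iff]; omega
    rw [hins, Finset.sum_insert (by simp)] at hbin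
    simp only [Nat.choose_zero_right, pow_zero, Nat.cast_one, one_mul, Nat.sub_zero] at hbin
    have : ∑ j ∈ Finset.Icc 1 n, (Nat.choose n j : ℝ) * q ^ j * (1 - q) ^ (n - j)
        = 1 - (1 - q) ^ n := by linarith
    rw [this]
  have split : ∑ j ∈ Finset.Icc 1 K,
      q ^ (j - 1) * (1 - q) ^ (K - j + 1) *
        ((Nat.choose K j : ℝ) - (Nat.choose (K - J) j : ℝ))
      = (∑ j ∈ Finset.Icc 1 K, q ^ (j - 1) * (1 - q) ^ (K - j + 1) * (Nat.choose K j : ℝ))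
      - ∑ j ∈ Finset.Icc 1 K, q ^ (j - 1) * (1 - q) ^ (K - j + 1) * (Nat.choose (K - J) j : ℝ) := by
    rw [← Finset.sum_sub_distrib]
    apply Finset.sum_congr rfl
    intro j _; ring
  rw [split, key K le_rfl, key (K - J) (Nat.sub_le K J)]
  have e1 : K - K + 1 = 1 := by omega
  have e2 : K - (K - J) + 1 = J + 1 := by omega
  rw [e1, e2]
  have e3 : (1 - q) ^ K = (1 - q) ^ J * (1 - q) ^ (K - J) := by
    rw [← pow_add]; congr 1; omega
  rw [e3]
  field_simp
  ring
end
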